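/- Let q > 2 be a prime power, h ≥ 2, and L₁, L₂, L₃ pairwise disjoint subsets of PG(2, q^h), each projectively equivalent to the trace-construction blocking set. Then L₁ ∪ L₂ ∪ L₃ is a minimal 3-fold blocking set: every line meets it in at least 3 points, and every point of it lies on a line meeting it in exactly 3 points. -/

import Mathlib

/-- The relative trace `x ↦ x + x^q + ⋯ + x^{q^{h-1}}`. -/
def Tr (q h : ℕ) {K : Type*} [Field K] (x : K) : K :=
  ∑ i ∈ Finset.range h, x ^ q ^ i

/-- The line of `PG(2, K)` with equation `a 0 * X + a 1 * Y + a 2 * Z = 0`. -/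
def projLine {K : Type*} [Field K] (a : Fin 3 → K) :
    Set (Projectivization K (Fin 3 → K)) :=
  {P | ∑ i, a i * P.rep i = 0}

/-- A subset of `PG(2, K)` is a line if it is `projLine a` for some nonzero `a`. -/
def IsLine {K : Type*} [Field K] (ℓ : Set (Projectivization K (Fin 3 → K))) : Prop :=
  ∃ a : Fin 3 → K, a ≠ 0 ∧ ℓ = projLine a

/-- The trace-construction point set
`{(x : Tr(x) : y) : x ∈ F_{q^h}, y ∈ F_q, (x,y) ≠ (0,0)}` in `PG(2, q^h)`. -/
def traceSet (q h : ℕ) (F K : Type*) [Field F] [Field K] [Algebra F K] :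
    Set (Projectivization K (Fin 3 → K)) :=
  {P | ∃ (x : K) (y : F), (x ≠ 0 ∨ y ≠ 0) ∧
    ∃ hv : (![x, Tr q h x, algebraMap F K y] : Fin 3 → K) ≠ 0,
      P = Projectivization.mk K (![x, Tr q h x, algebraMap F K y]) hv}

/-- `L` is projectively equivalent to the trace construction. -/
def ProjEquivTrace (q h : ℕ) (F K : Type*) [Field F] [Field K] [Algebra F K]
    (L : Set (Projectivization K (Fin 3 → K))) : Prop :=
  ∃ σ : (Fin 3 → K) ≃ₗ[K] (Fin 3 → K),
    Projectivization.map σ.toLinearMap σ.injective '' traceSet q h F K = L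

namespace Stmt8Aux

open Projectivization

variable {F K : Type*} [Field F] [Field K] [Algebra F K]

/-- Evaluation of the linear functional with coefficient vector `a`. -/
def lf (a w : Fin 3 → K) : K := a 0 * w 0 + a 1 * w 1 + a 2 * w 2

lemma sum_eq_lf (a w : Fin 3 → K) : ∑ i, a i * w i = lf a w := Fin.sum_univ_three _

lemma mem_projLine_iff {a : Fin 3 → K} {P} : P ∈ projLine a ↔ lf a P.rep = 0 := by
  simp [projLine, sum_eq_lf, Set.mem_setOf_eq]

lemma lf_smul_right (a : Fin 3 → K) (c : K) (w) : lf a (c • w) = c * lf a w := by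
  simp only [lf, Pi.smul_apply, smul_eq_mul]; ring

lemma lf_add_right (a u v : Fin 3 → K) : lf a (u + v) = lf a u + lf a v := by
  simp only [lf, Pi.add_apply]; ring

lemma lf_comb (a b : Fin 3 → K) (c : K) (w) : lf (a + c • b) w = lf a w + c * lf b w := by
  simp only [lf, Pi.add_apply, Pi.smul_apply, smul_eq_mul]; ring

instance finiteProj [Finite K] : Finite (Projectivization K (Fin 3 → K)) :=
  Finite.of_surjective (fun v : {v : Fin 3 → K // v ≠ 0} => mk K v.1 v.2)
    (fun p => ⟨⟨p.rep, p.rep_nonzero⟩, p.mk_rep⟩)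

lemma mk_mem_projLine {a w : Fin 3 → K} (hw : w ≠ 0) (h : lf a w = 0) :
    Projectivization.mk K w hw ∈ projLine a := by
  obtain ⟨u, hu⟩ := exists_smul_eq_mk_rep K w hw
  rw [mem_projLine_iff, ← hu, Units.smul_def, lf_smul_right, h, mul_zero]

lemma lf_eq_zero_of_mem {a w : Fin 3 → K} (hw : w ≠ 0)
    (h : Projectivization.mk K w hw ∈ projLine a) : lf a w = 0 := by
  obtain ⟨u, hu⟩ := exists_smul_eq_mk_rep K w hw
  rw [mem_projLine_iff, ← hu, Units.smul_def, lf_smul_right] at h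
  exact (mul_eq_zero.1 h).resolve_left u.ne_zero

lemma mk_eq_mk_of_smul {w v : Fin 3 → K} (hw : w ≠ 0) (hv : v ≠ 0) (c : K)
    (h : w = c • v) : Projectivization.mk K w hw = Projectivization.mk K v hv :=
  (mk_eq_mk_iff' K w v hw hv).2 ⟨c, h.symm⟩

lemma charF [Fintype F] {q p k : ℕ} (hp : Nat.Prime p) (hk : 0 < k)
    (hq : p ^ k = q) (hcard : Fintype.card F = q) : CharP F p := by
  haveI := ringChar.charP F
  haveI : Fact (Nat.Prime (ringChar F)) := ⟨CharP.char_is_prime F (ringChar F)⟩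
  obtain ⟨n, hn⟩ := FiniteField.card F (ringChar F)
  have h1 : p ∣ Fintype.card F := by rw [hcard, ← hq]; exact dvd_pow_self p hk.ne'
  rw [hn.2] at h1
  have : p = ringChar F := (Nat.prime_dvd_prime_iff_eq hp hn.1).1 (hp.dvd_of_dvd_pow h1)
  rw [this]; infer_instance

lemma frob_add [Fintype F] {q : ℕ} (hq : IsPrimePow q) (hcard : Fintype.card F = q)
    (i : ℕ) (x y : K) : (x + y) ^ q ^ i = x ^ q ^ i + y ^ q ^ i := by
  obtain ⟨p, k, hp, hk, rfl⟩ := hq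
  haveI : Fact (Nat.Prime p) := ⟨hp.nat_prime⟩
  haveI : CharP F p := charF hp.nat_prime hk rfl hcard
  haveI : CharP K p := charP_of_injective_algebraMap (algebraMap F K).injective p
  rw [← pow_mul]
  exact add_pow_char_pow x y p (k * i)

lemma tr_zero (q h : ℕ) (hq2 : 2 < q) : Tr q h (0 : K) = 0 := by
  unfold Tr
  refine Finset.sum_eq_zero fun i _ => zero_pow (pow_ne_zero i (by omega))

lemma tr_add [Fintype F] {q : ℕ} (hq : IsPrimePow q) (hcard : Fintype.card F = q)
    (h : ℕ) (x y : K) : Tr q h (x + y) = Tr q h x + Tr q h y := by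
  unfold Tr
  rw [← Finset.sum_add_distrib]
  exact Finset.sum_congr rfl fun i _ => frob_add hq hcard i x y

lemma pow_qi [Fintype F] {q : ℕ} (hcard : Fintype.card F = q) (i : ℕ) (c : F) :
    c ^ q ^ i = c := by
  induction i with
  | zero => simp
  | succ n ih => rw [pow_succ, pow_mul, ih, ← hcard, FiniteField.pow_card]

lemma tr_smul [Fintype F] {q : ℕ} (hcard : Fintype.card F = q)
    (h : ℕ) (c : F) (x : K) :
    Tr q h (algebraMap F K c * x) = algebraMap F K c * Tr q h x := by
  unfold Tr
  rw [Finset.mul_sum]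
  refine Finset.sum_congr rfl fun i _ => ?_
  rw [mul_pow, ← map_pow, pow_qi hcard i c]

lemma tr_neg [Fintype F] {q : ℕ} (hq : IsPrimePow q) (hq2 : 2 < q)
    (hcard : Fintype.card F = q) (h : ℕ) (x : K) : Tr q h (-x) = - Tr q h x := by
  have := tr_add (F := F) hq hcard h x (-x)
  rw [add_neg_cancel, tr_zero q h hq2] at this
  exact eq_neg_of_add_eq_zero_right this.symm

lemma block_core [Fintype F] [Fintype K] {q : ℕ} (hq : IsPrimePow q) (hq2 : 2 < q)
    (hcard : Fintype.card F = q) (h : ℕ) (b : Fin 3 → K) :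
    ∃ (x : K) (y : F), (x ≠ 0 ∨ y ≠ 0) ∧
      b 0 * x + b 1 * Tr q h x + b 2 * algebraMap F K y = 0 := by
  set φ : K → K := fun x => b 0 * x + b 1 * Tr q h x with hφ
  by_cases hker : ∃ x : K, x ≠ 0 ∧ φ x = 0
  · obtain ⟨x, hx, hx0⟩ := hker
    exact ⟨x, 0, Or.inl hx, by simpa [hφ] using hx0⟩
  · push_neg at hker
    have hinj : Function.Injective φ := by
      intro u v huv
      have hsub : Tr q h (u - v) = Tr q h u - Tr q h v := by
        rw [sub_eq_add_neg, tr_add hq hcard, tr_neg hq hq2 hcard, ← sub_eq_add_neg]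
      have hz : φ (u - v) = 0 := by
        have : φ u - φ v = 0 := sub_eq_zero.2 huv
        simp only [hφ, hsub] at this ⊢; ring_nf at this ⊢; linear_combination this
      by_contra hne
      exact hker _ (sub_ne_zero.2 hne) hz
    obtain ⟨x, hx⟩ := Finite.injective_iff_surjective.mp hinj (-(b 2 * algebraMap F K 1))
    refine ⟨x, 1, Or.inr one_ne_zero, ?_⟩
    have : φ x = -(b 2 * algebraMap F K 1) := hx
    simp only [hφ] at this
    rw [this]; ring

/-- The vector of the trace construction. -/
def tvec (q h : ℕ) (F K : Type*) [Field F] [Field K] [Algebra F K] (x : K) (y : F) :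
    Fin 3 → K := ![x, Tr q h x, algebraMap F K y]

/-- The data carried by any projective copy of the trace construction. -/
def Good (q : ℕ) (F K : Type*) [Field F] [Field K] [Algebra F K]
    [Fintype F] [Fintype K] (L : Set (Projectivization K (Fin 3 → K))) : Prop :=
  ∃ W : Set (Fin 3 → K),
    (0 ∈ W) ∧
    (∀ u v, u ∈ W → v ∈ W → u + v ∈ W) ∧
    (∀ (c : F) v, v ∈ W → algebraMap F K c • v ∈ W) ∧
    (∀ p, p ∈ L ↔ ∃ w, ∃ hw : w ≠ 0, w ∈ W ∧ p = Projectivization.mk K w hw) ∧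
    (W.ncard = Fintype.card K * Fintype.card F) ∧
    (∀ b : Fin 3 → K, b ≠ 0 → ∃ w, ∃ hw : w ≠ 0, w ∈ W ∧ lf b w = 0)

section good

variable [Fintype F] [Fintype K] {q h : ℕ}

lemma tvec_zero (hq2 : 2 < q) : tvec q h F K 0 0 = 0 := by
  funext i; fin_cases i <;> simp [tvec, tr_zero q h hq2]

lemma tvec_eq_zero_iff (hq2 : 2 < q) {x : K} {y : F} :
    tvec q h F K x y = 0 ↔ x = 0 ∧ y = 0 := by
  constructor
  · intro hz
    have h0 : x = 0 := by have := congrFun hz 0; simpa [tvec] using this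
    have h2 : algebraMap F K y = 0 := by have := congrFun hz 2; simpa [tvec] using this
    exact ⟨h0, by simpa using ((algebraMap F K).injective (by simpa using h2))⟩
  · rintro ⟨rfl, rfl⟩; exact tvec_zero hq2

lemma tvec_add (hq : IsPrimePow q) (hcard : Fintype.card F = q) (x x' : K) (y y' : F) :
    tvec q h F K x y + tvec q h F K x' y' = tvec q h F K (x + x') (y + y') := by
  funext i; fin_cases i <;> simp [tvec, tr_add hq hcard, map_add]

lemma tvec_smul (hcard : Fintype.card F = q) (c : F) (x : K) (y : F) :
    algebraMap F K c • tvec q h F K x y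
      = tvec q h F K (algebraMap F K c * x) (c * y) := by
  funext i; fin_cases i <;> simp [tvec, tr_smul hcard, map_mul]

lemma lf_tvec (b : Fin 3 → K) (x : K) (y : F) :
    lf b (tvec q h F K x y) = b 0 * x + b 1 * Tr q h x + b 2 * algebraMap F K y := rfl

lemma good_of_equiv (hq : IsPrimePow q) (hq2 : 2 < q) (hcard : Fintype.card F = q)
    {L : Set (Projectivization K (Fin 3 → K))} (hL : ProjEquivTrace q h F K L) :
    Good q F K L := by
  obtain ⟨σ, rfl⟩ := hL
  refine ⟨(⇑σ) '' (Set.range fun p : K × F => tvec q h F K p.1 p.2), ?_, ?_, ?_, ?_, ?_, ?_⟩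
  · exact ⟨tvec q h F K 0 0, ⟨(0, 0), rfl⟩, by rw [tvec_zero hq2, map_zero]⟩
  · rintro _ _ ⟨u, ⟨⟨x, y⟩, rfl⟩, rfl⟩ ⟨v, ⟨⟨x', y'⟩, rfl⟩, rfl⟩
    refine ⟨tvec q h F K (x + x') (y + y'), ⟨(x + x', y + y'), rfl⟩, ?_⟩
    rw [← tvec_add hq hcard, map_add]
  · rintro c _ ⟨u, ⟨⟨x, y⟩, rfl⟩, rfl⟩
    refine ⟨tvec q h F K (algebraMap F K c * x) (c * y),
      ⟨(algebraMap F K c * x, c * y), rfl⟩, ?_⟩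
    rw [← tvec_smul hcard, map_smul]
  · intro p
    constructor
    · rintro ⟨Q, hQ, rfl⟩
      obtain ⟨x, y, hxy, hv, rfl⟩ := hQ
      rw [Projectivization.map_mk]
      exact ⟨σ.toLinearMap ![x, Tr q h x, algebraMap F K y],
        (map_zero σ.toLinearMap ▸ σ.injective.ne hv),
        ⟨tvec q h F K x y, ⟨(x, y), rfl⟩, rfl⟩, rfl⟩
    · rintro ⟨w, hw, ⟨u, ⟨⟨x, y⟩, rfl⟩, rfl⟩, rfl⟩
      have hw' : σ (tvec q h F K x y) ≠ 0 := hw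
      have hu : tvec q h F K x y ≠ 0 := fun hz => hw' (by rw [hz, map_zero])
      have hxy : x ≠ 0 ∨ y ≠ 0 := by
        by_contra hc
        push_neg at hc
        exact hu ((tvec_eq_zero_iff hq2).2 ⟨hc.1, hc.2⟩)
      exact ⟨Projectivization.mk K (tvec q h F K x y) hu, ⟨x, y, hxy, hu, rfl⟩,
        by rw [Projectivization.map_mk]; rfl⟩
  · rw [Set.ncard_image_of_injective _ σ.injective]
    have hinj : Function.Injective (fun p : K × F => tvec q h F K p.1 p.2) := by
      rintro ⟨x, y⟩ ⟨x', y'⟩ hxy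
      have h0 := congrFun hxy 0
      have h2 := congrFun hxy 2
      simp only [tvec, Matrix.cons_val_zero] at h0
      have h2' : algebraMap F K y = algebraMap F K y' := by simpa [tvec] using h2
      exact Prod.ext h0 ((algebraMap F K).injective h2')
    rw [← Nat.card_coe_set_eq, Nat.card_range_of_injective hinj,
      Nat.card_eq_fintype_card, Fintype.card_prod]
  · intro b hb
    set e : Fin 3 → Fin 3 → K := fun j => Pi.single j 1 with he
    set b' : Fin 3 → K := ![lf b (σ (e 0)), lf b (σ (e 1)), lf b (σ (e 2))] with hb'def
    have key : ∀ v : Fin 3 → K, lf b (σ v) = lf b' v := by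
      intro v
      have hv : v = v 0 • e 0 + v 1 • e 1 + v 2 • e 2 := by
        funext i; fin_cases i <;> simp [he, Pi.single_apply]
      conv_lhs => rw [hv]
      rw [map_add, map_add, map_smul, map_smul, map_smul, lf_add_right, lf_add_right,
        lf_smul_right, lf_smul_right, lf_smul_right]
      simp [hb'def, lf]
      ring
    have hb'ne : b' ≠ 0 := by
      intro h0
      apply hb
      funext j
      have hj : lf b (σ (σ.symm (e j))) = 0 := by
        rw [key, h0]; simp [lf]
      rw [LinearEquiv.apply_symm_apply] at hj
      have hlj : lf b (e j) = b j := by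
        fin_cases j <;> simp [he, lf, Pi.single_apply]
      rw [hlj] at hj
      simpa using hj
    obtain ⟨x, y, hxy, heq⟩ := block_core hq hq2 hcard h b'
    have hu : tvec q h F K x y ≠ 0 := by
      intro hz
      obtain ⟨hx0, hy0⟩ := (tvec_eq_zero_iff hq2).1 hz
      rcases hxy with hx | hy
      · exact hx hx0
      · exact hy hy0
    refine ⟨σ (tvec q h F K x y),
      fun hz => hu (by simpa using σ.map_eq_zero_iff.1 hz),
      ⟨tvec q h F K x y, ⟨(x, y), rfl⟩, rfl⟩, ?_⟩
    rw [key, lf_tvec]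
    exact heq

lemma good_block_line {q : ℕ} {L : Set (Projectivization K (Fin 3 → K))}
    (G : Good q F K L) {a : Fin 3 → K} (ha : a ≠ 0) :
    ∃ p, p ∈ projLine a ∩ L := by
  obtain ⟨W, -, -, -, hmem, -, hbl⟩ := G
  obtain ⟨w, hw, hW, h0⟩ := hbl a ha
  exact ⟨Projectivization.mk K w hw, mk_mem_projLine hw h0,
    (hmem _).2 ⟨w, hw, hW, rfl⟩⟩

lemma good_one_le {q : ℕ} {L : Set (Projectivization K (Fin 3 → K))}
    (G : Good q F K L) {a : Fin 3 → K} (ha : a ≠ 0) :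
    1 ≤ (projLine a ∩ L).ncard := by
  obtain ⟨p, hp⟩ := good_block_line G ha
  exact (Set.ncard_pos (Set.toFinite _)).2 ⟨p, hp⟩

lemma good_secant {q : ℕ} {L : Set (Projectivization K (Fin 3 → K))}
    (G : Good q F K L) {a : Fin 3 → K}
    (h2 : 2 ≤ (projLine a ∩ L).ncard) :
    Fintype.card F + 1 ≤ (projLine a ∩ L).ncard := by
  obtain ⟨W, hW0, hWadd, hWsmul, hmem, -, -⟩ := G
  obtain ⟨p₁, p₂, hp₁, hp₂, hne⟩ := (Set.one_lt_ncard_iff (Set.toFinite _)).1 h2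
  obtain ⟨w₁, hw₁, hW₁, rfl⟩ := (hmem p₁).1 hp₁.2
  obtain ⟨w₂, hw₂, hW₂, rfl⟩ := (hmem p₂).1 hp₂.2
  have hl₁ : lf a w₁ = 0 := lf_eq_zero_of_mem hw₁ hp₁.1
  have hl₂ : lf a w₂ = 0 := lf_eq_zero_of_mem hw₂ hp₂.1
  have hind : ∀ s t : K, s • w₁ + t • w₂ = 0 → s = 0 ∧ t = 0 := by
    intro s t hst
    by_cases hs : s = 0
    · subst hs
      rw [zero_smul, zero_add] at hst
      exact ⟨rfl, (smul_eq_zero.1 hst).resolve_right hw₂⟩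
    · exfalso
      apply hne
      have h1 : s • w₁ = -(t • w₂) := eq_neg_iff_add_eq_zero.2 hst
      have h3 := congrArg (fun z => s⁻¹ • z) h1
      simp only [smul_smul, smul_neg] at h3
      rw [inv_mul_cancel₀ hs, one_smul] at h3
      have h2 : w₁ = (-(s⁻¹ * t)) • w₂ := by rw [h3, neg_smul]
      exact mk_eq_mk_of_smul hw₁ hw₂ _ h2
  have hnz : ∀ c : F, w₁ + algebraMap F K c • w₂ ≠ 0 := by
    intro c hz
    have := (hind 1 (algebraMap F K c) (by rwa [one_smul])).1
    exact one_ne_zero this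
  set g : Option F → Projectivization K (Fin 3 → K) := fun t =>
    Option.elim t (Projectivization.mk K w₂ hw₂)
      (fun c => Projectivization.mk K (w₁ + algebraMap F K c • w₂) (hnz c)) with hg
  have hginj : Function.Injective g := by
    intro t t' heq
    have key : ∀ c c' : F, (Projectivization.mk K (w₁ + algebraMap F K c • w₂) (hnz c)
        = Projectivization.mk K (w₁ + algebraMap F K c' • w₂) (hnz c')) → c = c' := by
      intro c c' hcc
      obtain ⟨s, hs⟩ := (mk_eq_mk_iff' K _ _ _ _).1 hcc
      have hcomb : (s - 1) • w₁ + (s * algebraMap F K c' - algebraMap F K c) • w₂ = 0 := by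
        have hs' : s • w₁ + (s * algebraMap F K c') • w₂ = w₁ + algebraMap F K c • w₂ := by
          rw [← smul_smul, ← smul_add]
          exact hs
        calc (s - 1) • w₁ + (s * algebraMap F K c' - algebraMap F K c) • w₂
            = (s • w₁ + (s * algebraMap F K c') • w₂) - (w₁ + algebraMap F K c • w₂) := by
              rw [sub_smul, sub_smul, one_smul]; abel
          _ = 0 := by rw [hs', sub_self]
      obtain ⟨hs1, hs2⟩ := hind _ _ hcomb
      have : s = 1 := by rwa [sub_eq_zero] at hs1
      subst this
      rw [one_mul, sub_eq_zero] at hs2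
      exact ((algebraMap F K).injective hs2).symm
    match t, t' with
    | none, none => rfl
    | some c, some c' => rw [key c c' heq]
    | some c, none =>
        exfalso
        obtain ⟨s, hs⟩ := (mk_eq_mk_iff' K _ _ _ _).1 heq
        have : (1 : K) • w₁ + (algebraMap F K c - s) • w₂ = 0 := by
          calc (1 : K) • w₁ + (algebraMap F K c - s) • w₂
              = (w₁ + algebraMap F K c • w₂) - s • w₂ := by
                rw [one_smul, sub_smul]; abel
            _ = 0 := by rw [← hs, sub_self]
        exact one_ne_zero (hind _ _ this).1
    | none, some c =>
        exfalso
        obtain ⟨s, hs⟩ := (mk_eq_mk_iff' K _ _ _ _).1 heq.symm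
        have : (1 : K) • w₁ + (algebraMap F K c - s) • w₂ = 0 := by
          calc (1 : K) • w₁ + (algebraMap F K c - s) • w₂
              = (w₁ + algebraMap F K c • w₂) - s • w₂ := by
                rw [one_smul, sub_smul]; abel
            _ = 0 := by rw [← hs, sub_self]
        exact one_ne_zero (hind _ _ this).1
  have hsub : Set.range g ⊆ projLine a ∩ L := by
    rintro p ⟨t, rfl⟩
    match t with
    | none => exact ⟨hp₂.1, (hmem _).2 ⟨w₂, hw₂, hW₂, rfl⟩⟩
    | some c =>
        refine ⟨mk_mem_projLine (hnz c) ?_, (hmem _).2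
          ⟨_, hnz c, hWadd _ _ hW₁ (hWsmul c _ hW₂), rfl⟩⟩
        show lf a (w₁ + algebraMap F K c • w₂) = 0
        rw [lf_add_right, lf_smul_right, hl₁, hl₂, mul_zero, add_zero]
  have hcard : (Set.range g).ncard = Fintype.card F + 1 := by
    rw [← Nat.card_coe_set_eq, Nat.card_range_of_injective hginj,
      Nat.card_eq_fintype_card, Fintype.card_option]
  rw [← hcard]
  exact Set.ncard_le_ncard hsub (Set.toFinite _)

lemma good_card_bound {q : ℕ} {L : Set (Projectivization K (Fin 3 → K))}
    (G : Good q F K L) :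
    L.ncard * (Fintype.card F - 1) ≤ Fintype.card K * Fintype.card F - 1 := by
  classical
  obtain ⟨W, hW0, hWadd, hWsmul, hmem, hWcard, -⟩ := G
  have hch : ∀ p : L, ∃ w, ∃ hw : w ≠ 0, w ∈ W ∧ (p : Projectivization K (Fin 3 → K))
      = Projectivization.mk K w hw := fun p => (hmem p).1 p.2
  choose wf hwf hWf hmk using hch
  have hzmem : ∀ (p : L) (c : Fˣ), algebraMap F K (c : F) • wf p ∈ W \ {0} := by
    intro p c
    refine ⟨hWsmul _ _ (hWf p), ?_⟩
    simp only [Set.mem_singleton_iff]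
    exact smul_ne_zero (by simpa using c.ne_zero) (hwf p)
  set g : L × Fˣ → (W \ {0} : Set (Fin 3 → K)) := fun pc =>
    ⟨algebraMap F K (pc.2 : F) • wf pc.1, hzmem pc.1 pc.2⟩ with hgdef
  have hginj : Function.Injective g := by
    rintro ⟨p, c⟩ ⟨p', c'⟩ hpq
    have hvec : algebraMap F K (c : F) • wf p = algebraMap F K (c' : F) • wf p' :=
      congrArg Subtype.val hpq
    have hcne : algebraMap F K (c : F) ≠ 0 := by simpa using c.ne_zero
    have hcne' : algebraMap F K (c' : F) ≠ 0 := by simpa using c'.ne_zero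
    have hpp : p = p' := by
      have h1 : (p : Projectivization K (Fin 3 → K)) = (p' : _) := by
        rw [hmk p, hmk p']
        calc Projectivization.mk K (wf p) (hwf p)
            = Projectivization.mk K (algebraMap F K (c : F) • wf p)
                (smul_ne_zero hcne (hwf p)) := by
              refine (mk_eq_mk_of_smul _ _ (algebraMap F K (c : F)) rfl).symm
          _ = Projectivization.mk K (algebraMap F K (c' : F) • wf p')
                (smul_ne_zero hcne' (hwf p')) := by
              congr 1
          _ = Projectivization.mk K (wf p') (hwf p') :=
              mk_eq_mk_of_smul _ _ (algebraMap F K (c' : F)) rfl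
      exact Subtype.ext h1
    subst hpp
    have hceq : (c : F) = (c' : F) := by
      have := hvec
      have hsub : (algebraMap F K (c : F) - algebraMap F K (c' : F)) • wf p = 0 := by
        rw [sub_smul, this, sub_self]
      have := (smul_eq_zero.1 hsub).resolve_right (hwf p)
      rw [sub_eq_zero] at this
      exact (algebraMap F K).injective this
    rw [Prod.mk.injEq]
    exact ⟨rfl, Units.ext hceq⟩
  have hfin : (W \ {0} : Set (Fin 3 → K)).Finite := Set.toFinite _
  have hle : Nat.card (L × Fˣ) ≤ Nat.card (W \ {0} : Set (Fin 3 → K)) := by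
    haveI : Finite (W \ {0} : Set (Fin 3 → K)) := hfin
    exact Nat.card_le_card_of_injective g hginj
  rw [Nat.card_prod, Nat.card_coe_set_eq, Nat.card_coe_set_eq,
    Nat.card_eq_fintype_card, Fintype.card_units,
    Set.ncard_diff_singleton_of_mem hW0, hWcard] at hle
  exact hle

omit [Fintype F] [Fintype K] in
lemma case0 (v : Fin 3 → K) (hj : v 0 ≠ 0) :
    ∃ a b : Fin 3 → K, lf a v = 0 ∧ lf b v = 0 ∧ (∀ c : K, a + c • b ≠ 0) ∧ b ≠ 0 ∧
      ∀ w : Fin 3 → K, lf a w = 0 → lf b w = 0 → ∃ c : K, w = c • v := by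
  refine ⟨![-(v 1) * (v 0)⁻¹, 1, 0], ![-(v 2) * (v 0)⁻¹, 0, 1], ?_, ?_, ?_, ?_, ?_⟩
  · show -(v 1) * (v 0)⁻¹ * v 0 + 1 * v 1 + 0 * v 2 = 0
    field_simp
    ring
  · show -(v 2) * (v 0)⁻¹ * v 0 + 0 * v 1 + 1 * v 2 = 0
    field_simp
    ring
  · intro c hc
    have := congrFun hc 1
    simp at this
  · intro hb
    have := congrFun hb 2
    simp at this
  · intro w ha hb
    have ha' : -(v 1) * (v 0)⁻¹ * w 0 + 1 * w 1 + 0 * w 2 = 0 := ha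
    have hb' : -(v 2) * (v 0)⁻¹ * w 0 + 0 * w 1 + 1 * w 2 = 0 := hb
    have ha2 : v 0 * w 1 = v 1 * w 0 := by field_simp at ha'; linear_combination ha'
    have hb2 : v 0 * w 2 = v 2 * w 0 := by field_simp at hb'; linear_combination hb'
    refine ⟨w 0 * (v 0)⁻¹, ?_⟩
    have e0 : w 0 = w 0 * (v 0)⁻¹ * v 0 := by field_simp
    have e1 : w 1 = w 0 * (v 0)⁻¹ * v 1 := by field_simp; linear_combination ha2
    have e2 : w 2 = w 0 * (v 0)⁻¹ * v 2 := by field_simp; linear_combination hb2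
    funext i
    fin_cases i
    · exact e0
    · exact e1
    · exact e2

omit [Fintype F] [Fintype K] in
lemma case1 (v : Fin 3 → K) (hj : v 1 ≠ 0) :
    ∃ a b : Fin 3 → K, lf a v = 0 ∧ lf b v = 0 ∧ (∀ c : K, a + c • b ≠ 0) ∧ b ≠ 0 ∧
      ∀ w : Fin 3 → K, lf a w = 0 → lf b w = 0 → ∃ c : K, w = c • v := by
  refine ⟨![1, -(v 0) * (v 1)⁻¹, 0], ![0, -(v 2) * (v 1)⁻¹, 1], ?_, ?_, ?_, ?_, ?_⟩
  · show 1 * v 0 + -(v 0) * (v 1)⁻¹ * v 1 + 0 * v 2 = 0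
    field_simp
    ring
  · show 0 * v 0 + -(v 2) * (v 1)⁻¹ * v 1 + 1 * v 2 = 0
    field_simp
    ring
  · intro c hc
    have := congrFun hc 0
    simp at this
  · intro hb
    have := congrFun hb 2
    simp at this
  · intro w ha hb
    have ha' : 1 * w 0 + -(v 0) * (v 1)⁻¹ * w 1 + 0 * w 2 = 0 := ha
    have hb' : 0 * w 0 + -(v 2) * (v 1)⁻¹ * w 1 + 1 * w 2 = 0 := hb
    have ha2 : v 1 * w 0 = v 0 * w 1 := by field_simp at ha'; linear_combination ha'
    have hb2 : v 1 * w 2 = v 2 * w 1 := by field_simp at hb'; linear_combination hb'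
    refine ⟨w 1 * (v 1)⁻¹, ?_⟩
    have e0 : w 0 = w 1 * (v 1)⁻¹ * v 0 := by field_simp; linear_combination ha2
    have e1 : w 1 = w 1 * (v 1)⁻¹ * v 1 := by field_simp
    have e2 : w 2 = w 1 * (v 1)⁻¹ * v 2 := by field_simp; linear_combination hb2
    funext i
    fin_cases i
    · exact e0
    · exact e1
    · exact e2

omit [Fintype F] [Fintype K] in
lemma case2 (v : Fin 3 → K) (hj : v 2 ≠ 0) :
    ∃ a b : Fin 3 → K, lf a v = 0 ∧ lf b v = 0 ∧ (∀ c : K, a + c • b ≠ 0) ∧ b ≠ 0 ∧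
      ∀ w : Fin 3 → K, lf a w = 0 → lf b w = 0 → ∃ c : K, w = c • v := by
  refine ⟨![1, 0, -(v 0) * (v 2)⁻¹], ![0, 1, -(v 1) * (v 2)⁻¹], ?_, ?_, ?_, ?_, ?_⟩
  · show 1 * v 0 + 0 * v 1 + -(v 0) * (v 2)⁻¹ * v 2 = 0
    field_simp
    ring
  · show 0 * v 0 + 1 * v 1 + -(v 1) * (v 2)⁻¹ * v 2 = 0
    field_simp
    ring
  · intro c hc
    have := congrFun hc 0
    simp at this
  · intro hb
    have := congrFun hb 1
    simp at this
  · intro w ha hb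
    have ha' : 1 * w 0 + 0 * w 1 + -(v 0) * (v 2)⁻¹ * w 2 = 0 := ha
    have hb' : 0 * w 0 + 1 * w 1 + -(v 1) * (v 2)⁻¹ * w 2 = 0 := hb
    have ha2 : v 2 * w 0 = v 0 * w 2 := by field_simp at ha'; linear_combination ha'
    have hb2 : v 2 * w 1 = v 1 * w 2 := by field_simp at hb'; linear_combination hb'
    refine ⟨w 2 * (v 2)⁻¹, ?_⟩
    have e0 : w 0 = w 2 * (v 2)⁻¹ * v 0 := by field_simp; linear_combination ha2
    have e1 : w 1 = w 2 * (v 2)⁻¹ * v 1 := by field_simp; linear_combination hb2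
    have e2 : w 2 = w 2 * (v 2)⁻¹ * v 2 := by field_simp
    funext i
    fin_cases i
    · exact e0
    · exact e1
    · exact e2

omit [Fintype F] [Fintype K] in
lemma exists_funcs (v : Fin 3 → K) (hv : v ≠ 0) :
    ∃ a b : Fin 3 → K, lf a v = 0 ∧ lf b v = 0 ∧ (∀ c : K, a + c • b ≠ 0) ∧ b ≠ 0 ∧
      ∀ w : Fin 3 → K, lf a w = 0 → lf b w = 0 → ∃ c : K, w = c • v := by
  obtain ⟨j, hj⟩ : ∃ j, v j ≠ 0 := by rwa [Ne, funext_iff, not_forall] at hv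
  fin_cases j
  · exact case0 v hj
  · exact case1 v hj
  · exact case2 v hj

end good

lemma ncard_eq_sum_partition {α ι : Type*} [Fintype ι] [Finite α] (S : Set α) (f : ι → Set α)
    (hex : ∀ x ∈ S, ∃ t, x ∈ f t)
    (hun : ∀ x ∈ S, ∀ t t', x ∈ f t → x ∈ f t' → t = t') :
    ∑ t, (f t ∩ S).ncard = S.ncard := by
  classical
  have hdisj : ∀ t ∈ (Finset.univ : Finset ι), ∀ t' ∈ (Finset.univ : Finset ι), t ≠ t' →
      Disjoint ((f t ∩ S).toFinite.toFinset) ((f t' ∩ S).toFinite.toFinset) := by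
    intro t _ t' _ hne
    rw [Finset.disjoint_left]
    intro x hx hx'
    rw [Set.Finite.mem_toFinset] at hx hx'
    exact hne (hun x hx.2 t t' hx.1 hx'.1)
  have hFS : S.toFinite.toFinset
      = Finset.univ.biUnion (fun t => (f t ∩ S).toFinite.toFinset) := by
    ext x
    simp only [Set.Finite.mem_toFinset, Finset.mem_biUnion, Finset.mem_univ, true_and,
      Set.mem_inter_iff]
    constructor
    · intro hx
      obtain ⟨t, ht⟩ := hex x hx
      exact ⟨t, ht, hx⟩
    · rintro ⟨t, -, hx⟩
      exact hx
  calc ∑ t, (f t ∩ S).ncard = ∑ t, ((f t ∩ S).toFinite.toFinset).card :=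
        Finset.sum_congr rfl fun t _ => Set.ncard_eq_toFinset_card _ _
    _ = (Finset.univ.biUnion (fun t => (f t ∩ S).toFinite.toFinset)).card :=
        (Finset.card_biUnion hdisj).symm
    _ = (S.toFinite.toFinset).card := by rw [← hFS]
    _ = S.ncard := (Set.ncard_eq_toFinset_card _ _).symm

lemma ncard_union3 {α : Type*} {A B C : Set α} (hA : A.ncard = 1) (hB : B.ncard = 1)
    (hC : C.ncard = 1) (dAB : Disjoint A B) (dAC : Disjoint A C) (dBC : Disjoint B C) :
    (A ∪ B ∪ C).ncard = 3 := by
  obtain ⟨a, rfl⟩ := Set.ncard_eq_one.1 hA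
  obtain ⟨b, rfl⟩ := Set.ncard_eq_one.1 hB
  obtain ⟨c, rfl⟩ := Set.ncard_eq_one.1 hC
  have hab : a ≠ b := by
    intro h; subst h
    exact (Set.disjoint_left.1 dAB) rfl rfl
  have hac : a ≠ c := by
    intro h; subst h
    exact (Set.disjoint_left.1 dAC) rfl rfl
  have hbc : b ≠ c := by
    intro h; subst h
    exact (Set.disjoint_left.1 dBC) rfl rfl
  have : ({a} : Set α) ∪ {b} ∪ {c} = {a, b, c} := by
    ext x
    simp only [Set.mem_union, Set.mem_singleton_iff, Set.mem_insert_iff]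
    tauto
  rw [this]
  exact Set.ncard_eq_three.2 ⟨a, b, c, hab, hac, hbc, rfl⟩

lemma arith (Nc Qc m B C : ℕ) (hQ : 3 ≤ Qc) (hN : 1 ≤ Nc)
    (h1 : (m + 1) * (Qc - 1) ≤ Nc * Qc - 1)
    (h2 : B * (Qc - 1) ≤ Nc * Qc - 1)
    (h3 : C * (Qc - 1) ≤ Nc * Qc - 1)
    (hs : (Nc + 1) * (Qc + 3) ≤ m + (Nc + 1) + B + C) : False := by
  obtain ⟨q1, rfl⟩ : ∃ q1, Qc = q1 + 3 := ⟨Qc - 3, by omega⟩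
  have hone : 1 ≤ Nc * (q1 + 3) := le_trans hN (Nat.le_mul_of_pos_right _ (by omega))
  have hsub : (q1 + 3) - 1 = q1 + 2 := by omega
  rw [hsub] at h1 h2 h3
  set M := Nc * (q1 + 3) - 1 with hMdef
  have hM : M + 1 = Nc * (q1 + 3) := by omega
  have key := Nat.mul_le_mul_right (q1 + 2) hs
  nlinarith [key, h1, h2, h3, hM, hN]

section main
variable [Fintype F] [Fintype K]

lemma tri_tangent {q : ℕ} (hq3 : 3 ≤ Fintype.card F)
    {LA LB LC : Set (Projectivization K (Fin 3 → K))}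
    (GA : Good q F K LA) (GB : Good q F K LB) (GC : Good q F K LC)
    (dAB : Disjoint LA LB) (dAC : Disjoint LA LC)
    {P : Projectivization K (Fin 3 → K)} (hP : P ∈ LA) :
    ∃ d : Fin 3 → K, d ≠ 0 ∧ P ∈ projLine d ∧ (projLine d ∩ LA).ncard = 1 ∧
      (projLine d ∩ LB).ncard = 1 ∧ (projLine d ∩ LC).ncard = 1 := by
  classical
  obtain ⟨a, b, hav, hbv, hab, hb0, hspan⟩ := exists_funcs P.rep P.rep_nonzero
  set coef : Option K → (Fin 3 → K) := fun t => Option.elim t b (fun c => a + c • b)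
    with hcoef
  have hcne : ∀ t, coef t ≠ 0 := by
    intro t
    cases t with
    | none => exact hb0
    | some c => exact hab c
  have hPmem : ∀ t, P ∈ projLine (coef t) := by
    intro t
    rw [mem_projLine_iff]
    cases t with
    | none => exact hbv
    | some c =>
        show lf (a + c • b) P.rep = 0
        rw [lf_comb, hav, hbv, mul_zero, add_zero]
  have hcover : ∀ Q : Projectivization K (Fin 3 → K), ∃ t, Q ∈ projLine (coef t) := by
    intro Q
    by_cases hbQ : lf b Q.rep = 0
    · exact ⟨none, mem_projLine_iff.2 hbQ⟩
    · refine ⟨some (-(lf a Q.rep) * (lf b Q.rep)⁻¹), mem_projLine_iff.2 ?_⟩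
      show lf (a + (-(lf a Q.rep) * (lf b Q.rep)⁻¹) • b) Q.rep = 0
      rw [lf_comb]
      field_simp
      ring
  have huniq : ∀ (Q : Projectivization K (Fin 3 → K)) (t t' : Option K), t ≠ t' →
      Q ∈ projLine (coef t) → Q ∈ projLine (coef t') → Q = P := by
    intro Q t t' hne h1 h2
    rw [mem_projLine_iff] at h1 h2
    have hQab : lf a Q.rep = 0 ∧ lf b Q.rep = 0 := by
      match t, t' with
      | none, none => exact absurd rfl hne
      | some c, some c' =>
          have e1 : lf a Q.rep + c * lf b Q.rep = 0 := by rw [← lf_comb]; exact h1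
          have e2 : lf a Q.rep + c' * lf b Q.rep = 0 := by rw [← lf_comb]; exact h2
          have hcc : c ≠ c' := fun hcx => hne (by rw [hcx])
          have hbz : lf b Q.rep = 0 := by
            have hd : (c - c') * lf b Q.rep = 0 := by linear_combination e1 - e2
            exact (mul_eq_zero.1 hd).resolve_left (sub_ne_zero.2 hcc)
          exact ⟨by linear_combination e1 - c * hbz, hbz⟩
      | none, some c' =>
          have hbz : lf b Q.rep = 0 := h1
          have e2 : lf a Q.rep + c' * lf b Q.rep = 0 := by rw [← lf_comb]; exact h2
          exact ⟨by linear_combination e2 - c' * hbz, hbz⟩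
      | some c, none =>
          have hbz : lf b Q.rep = 0 := h2
          have e1 : lf a Q.rep + c * lf b Q.rep = 0 := by rw [← lf_comb]; exact h1
          exact ⟨by linear_combination e1 - c * hbz, hbz⟩
    obtain ⟨cQ, hcQ⟩ := hspan Q.rep hQab.1 hQab.2
    have hcQ0 : cQ ≠ 0 := fun h0 => Q.rep_nonzero (by rw [hcQ, h0, zero_smul])
    calc Q = Projectivization.mk K Q.rep Q.rep_nonzero := Q.mk_rep.symm
      _ = Projectivization.mk K P.rep P.rep_nonzero := mk_eq_mk_of_smul _ _ cQ hcQ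
      _ = P := P.mk_rep
  have htri : ∃ t : Option K, (projLine (coef t) ∩ LA).ncard ≤ 1 ∧
      (projLine (coef t) ∩ LB).ncard ≤ 1 ∧ (projLine (coef t) ∩ LC).ncard ≤ 1 := by
    by_contra hcon
    push_neg at hcon
    have hPB : P ∉ LB := fun hc => (Set.disjoint_left.1 dAB) hP hc
    have hPC : P ∉ LC := fun hc => (Set.disjoint_left.1 dAC) hP hc
    have hsumB : ∑ t : Option K, (projLine (coef t) ∩ LB).ncard = LB.ncard := by
      refine ncard_eq_sum_partition LB (fun t => projLine (coef t))
        (fun x _ => hcover x) ?_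
      intro x hx t t' ht ht'
      by_contra hne
      exact hPB ((huniq x t t' hne ht ht') ▸ hx)
    have hsumC : ∑ t : Option K, (projLine (coef t) ∩ LC).ncard = LC.ncard := by
      refine ncard_eq_sum_partition LC (fun t => projLine (coef t))
        (fun x _ => hcover x) ?_
      intro x hx t t' ht ht'
      by_contra hne
      exact hPC ((huniq x t t' hne ht ht') ▸ hx)
    have hsumA : ∑ t : Option K, (projLine (coef t) ∩ (LA \ {P})).ncard
        = (LA \ {P}).ncard := by
      refine ncard_eq_sum_partition (LA \ {P}) (fun t => projLine (coef t))
        (fun x _ => hcover x) ?_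
      intro x hx t t' ht ht'
      by_contra hne
      exact hx.2 (huniq x t t' hne ht ht')
    have hAt : ∀ t, (projLine (coef t) ∩ LA).ncard
        = (projLine (coef t) ∩ (LA \ {P})).ncard + 1 := by
      intro t
      have hins : projLine (coef t) ∩ LA
          = insert P (projLine (coef t) ∩ (LA \ {P})) := by
        ext x
        simp only [Set.mem_inter_iff, Set.mem_insert_iff, Set.mem_diff,
          Set.mem_singleton_iff]
        constructor
        · rintro ⟨hx1, hx2⟩
          by_cases hxP : x = P
          · exact Or.inl hxP
          · exact Or.inr ⟨hx1, hx2, hxP⟩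
        · rintro (rfl | ⟨hx1, hx2, -⟩)
          · exact ⟨hPmem t, hP⟩
          · exact ⟨hx1, hx2⟩
      rw [hins, Set.ncard_insert_of_notMem (fun hc => hc.2.2 rfl) (Set.toFinite _)]
    have hlow : ∀ t : Option K, Fintype.card F + 3 ≤
        (projLine (coef t) ∩ LA).ncard + (projLine (coef t) ∩ LB).ncard
          + (projLine (coef t) ∩ LC).ncard := by
      intro t
      have h1 : 1 ≤ (projLine (coef t) ∩ LA).ncard :=
        (Set.ncard_pos (Set.toFinite _)).2 ⟨P, hPmem t, hP⟩
      have h2 : 1 ≤ (projLine (coef t) ∩ LB).ncard := good_one_le GB (hcne t)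
      have h3 : 1 ≤ (projLine (coef t) ∩ LC).ncard := good_one_le GC (hcne t)
      by_cases hA2 : 2 ≤ (projLine (coef t) ∩ LA).ncard
      · have := good_secant GA hA2
        omega
      by_cases hB2 : 2 ≤ (projLine (coef t) ∩ LB).ncard
      · have := good_secant GB hB2
        omega
      · have hC2 : 2 ≤ (projLine (coef t) ∩ LC).ncard := hcon t (by omega) (by omega)
        have := good_secant GC hC2
        omega
    have hsum_tot : (Fintype.card K + 1) * (Fintype.card F + 3) ≤
        ∑ t : Option K, ((projLine (coef t) ∩ LA).ncard
          + (projLine (coef t) ∩ LB).ncard + (projLine (coef t) ∩ LC).ncard) := by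
      calc (Fintype.card K + 1) * (Fintype.card F + 3)
          = ∑ _t : Option K, (Fintype.card F + 3) := by
            rw [Finset.sum_const, Finset.card_univ, Fintype.card_option, smul_eq_mul]
        _ ≤ _ := Finset.sum_le_sum fun t _ => hlow t
    rw [Finset.sum_add_distrib, Finset.sum_add_distrib, hsumB, hsumC] at hsum_tot
    have hsumA' : ∑ t : Option K, (projLine (coef t) ∩ LA).ncard
        = (LA \ {P}).ncard + (Fintype.card K + 1) := by
      calc ∑ t : Option K, (projLine (coef t) ∩ LA).ncard
          = ∑ t : Option K, ((projLine (coef t) ∩ (LA \ {P})).ncard + 1) :=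
            Finset.sum_congr rfl fun t _ => hAt t
        _ = (∑ t : Option K, (projLine (coef t) ∩ (LA \ {P})).ncard)
              + (Fintype.card K + 1) := by
            rw [Finset.sum_add_distrib, Finset.sum_const, Finset.card_univ,
              Fintype.card_option, smul_eq_mul, mul_one]
        _ = (LA \ {P}).ncard + (Fintype.card K + 1) := by rw [hsumA]
    rw [hsumA'] at hsum_tot
    have hA : LA.ncard = (LA \ {P}).ncard + 1 := by
      have hins : LA = insert P (LA \ {P}) := by
        rw [Set.insert_diff_singleton, Set.insert_eq_self.2 hP]
      conv_lhs => rw [hins]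
      rw [Set.ncard_insert_of_notMem (fun hc => hc.2 rfl) (Set.toFinite _)]
    have bA := good_card_bound GA
    have bB := good_card_bound GB
    have bC := good_card_bound GC
    rw [hA] at bA
    refine arith (Fintype.card K) (Fintype.card F) ((LA \ {P}).ncard)
      LB.ncard LC.ncard hq3 Fintype.card_pos ?_ ?_ ?_ ?_
    · exact bA
    · exact bB
    · exact bC
    · exact hsum_tot
  obtain ⟨t, htA, htB, htC⟩ := htri
  refine ⟨coef t, hcne t, hPmem t, ?_, ?_, ?_⟩
  · have hne : (projLine (coef t) ∩ LA).Nonempty := ⟨P, hPmem t, hP⟩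
    have := (Set.ncard_pos (Set.toFinite _)).2 hne
    omega
  · have := good_one_le GB (hcne t)
    omega
  · have := good_one_le GC (hcne t)
    omega

end main
end Stmt8Aux

theorem stmt_8 {F K : Type*} [Field F] [Field K] [Algebra F K]
    [Fintype F] [Fintype K]
    (q h : ℕ) (hq : IsPrimePow q) (hq2 : 2 < q) (hcard : Fintype.card F = q)
    (hh : 2 ≤ h) (hrank : Module.finrank F K = h)
    (L₁ L₂ L₃ : Set (Projectivization K (Fin 3 → K)))
    (h₁ : ProjEquivTrace q h F K L₁) (h₂ : ProjEquivTrace q h F K L₂)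
    (h₃ : ProjEquivTrace q h F K L₃)
    (h12 : Disjoint L₁ L₂) (h13 : Disjoint L₁ L₃) (h23 : Disjoint L₂ L₃) :
    (∀ a : Fin 3 → K, a ≠ 0 → 3 ≤ (projLine a ∩ (L₁ ∪ L₂ ∪ L₃)).ncard) ∧
    (∀ P ∈ L₁ ∪ L₂ ∪ L₃, ∃ ℓ, IsLine ℓ ∧ P ∈ ℓ ∧
      (ℓ ∩ (L₁ ∪ L₂ ∪ L₃)).ncard = 3) := by
  have hq3 : 3 ≤ Fintype.card F := by rw [hcard]; omega
  have G1 := Stmt8Aux.good_of_equiv hq hq2 hcard h₁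
  have G2 := Stmt8Aux.good_of_equiv hq hq2 hcard h₂
  have G3 := Stmt8Aux.good_of_equiv hq hq2 hcard h₃
  have hdistr : ∀ d : Fin 3 → K, projLine d ∩ (L₁ ∪ L₂ ∪ L₃)
      = (projLine d ∩ L₁) ∪ (projLine d ∩ L₂) ∪ (projLine d ∩ L₃) := by
    intro d
    rw [Set.inter_union_distrib_left, Set.inter_union_distrib_left]
  constructor
  · intro a ha
    obtain ⟨p₁, hp₁⟩ := Stmt8Aux.good_block_line G1 ha
    obtain ⟨p₂, hp₂⟩ := Stmt8Aux.good_block_line G2 ha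
    obtain ⟨p₃, hp₃⟩ := Stmt8Aux.good_block_line G3 ha
    have hne12 : p₁ ≠ p₂ := fun hc => (Set.disjoint_left.1 h12) hp₁.2 (hc ▸ hp₂.2)
    have hne13 : p₁ ≠ p₃ := fun hc => (Set.disjoint_left.1 h13) hp₁.2 (hc ▸ hp₃.2)
    have hne23 : p₂ ≠ p₃ := fun hc => (Set.disjoint_left.1 h23) hp₂.2 (hc ▸ hp₃.2)
    have hsub : ({p₁, p₂, p₃} : Set (Projectivization K (Fin 3 → K)))
        ⊆ projLine a ∩ (L₁ ∪ L₂ ∪ L₃) := by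
      rintro x (rfl | rfl | rfl)
      · exact ⟨hp₁.1, Or.inl (Or.inl hp₁.2)⟩
      · exact ⟨hp₂.1, Or.inl (Or.inr hp₂.2)⟩
      · exact ⟨hp₃.1, Or.inr hp₃.2⟩
    have h3 : ({p₁, p₂, p₃} : Set (Projectivization K (Fin 3 → K))).ncard = 3 :=
      Set.ncard_eq_three.2 ⟨p₁, p₂, p₃, hne12, hne13, hne23, rfl⟩
    calc (3 : ℕ) = ({p₁, p₂, p₃} : Set (Projectivization K (Fin 3 → K))).ncard := h3.symm
      _ ≤ (projLine a ∩ (L₁ ∪ L₂ ∪ L₃)).ncard :=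
          Set.ncard_le_ncard hsub (Set.toFinite _)
  · intro P hP
    have d12 : ∀ d, Disjoint (projLine d ∩ L₁) (projLine d ∩ L₂) :=
      fun d => h12.mono Set.inter_subset_right Set.inter_subset_right
    have d13 : ∀ d, Disjoint (projLine d ∩ L₁) (projLine d ∩ L₃) :=
      fun d => h13.mono Set.inter_subset_right Set.inter_subset_right
    have d23 : ∀ d, Disjoint (projLine d ∩ L₂) (projLine d ∩ L₃) :=
      fun d => h23.mono Set.inter_subset_right Set.inter_subset_right
    rcases hP with (hP1 | hP2) | hP3
    · obtain ⟨d, hd0, hPd, c1, c2, c3⟩ :=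
        Stmt8Aux.tri_tangent hq3 G1 G2 G3 h12 h13 hP1
      refine ⟨projLine d, ⟨d, hd0, rfl⟩, hPd, ?_⟩
      rw [hdistr d]
      exact Stmt8Aux.ncard_union3 c1 c2 c3 (d12 d) (d13 d) (d23 d)
    · obtain ⟨d, hd0, hPd, c1, c2, c3⟩ :=
        Stmt8Aux.tri_tangent hq3 G2 G1 G3 h12.symm h23 hP2
      refine ⟨projLine d, ⟨d, hd0, rfl⟩, hPd, ?_⟩
      rw [hdistr d]
      exact Stmt8Aux.ncard_union3 c2 c1 c3 (d12 d) (d13 d) (d23 d)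
    · obtain ⟨d, hd0, hPd, c1, c2, c3⟩ :=
        Stmt8Aux.tri_tangent hq3 G3 G1 G2 h13.symm h23.symm hP3
      refine ⟨projLine d, ⟨d, hd0, rfl⟩, hPd, ?_⟩
      rw [hdistr d]
      exact Stmt8Aux.ncard_union3 c2 c3 c1 (d12 d) (d13 d) (d23 d)
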